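/- Let q be a prime power, d | q−1 with d ≥ 2, ℓ ≥ 1, and f(x) = x^{(q−1)/d − ℓ} + g(x) ∈ F_q[x] with 1 ≤ deg(g) < (q−1)/d − ℓ and nonzero constant term of f. With the iterated sequences ℓ_i, g_i defined by ℓ₀ = ℓ, g₀ = g, g_{i+1}(x) = −x^{d·deg(g_i)} g_i(1/x)^d, ℓ_{i+1} = (q−1)/d − d(ℓ_i + deg g_i): if d(ℓ_i + deg g_i) < (q−1)/d for all 0 ≤ i ≤ k, then |Z(f)| ≤ min over 0 ≤ i ≤ k+1 of d(ℓ_i + deg g_i). -/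

import Mathlib

open Polynomial

private lemma my_eval_reverse {F : Type*} [Field F] (p : F[X]) {z : F} (hz : z ≠ 0) :
    p.reverse.eval z = p.eval z⁻¹ * z ^ p.natDegree := by
  have hz' : z⁻¹ ≠ 0 := inv_ne_zero hz
  letI : Invertible (z⁻¹ : F) := invertibleOfNonzero hz'
  have h := Polynomial.eval₂_reverse_mul_pow (RingHom.id F) (z⁻¹) p
  rw [invOf_eq_inv, inv_inv] at h
  simp only [eval₂_eq_eval_map, Polynomial.map_id] at h
  have hzn : (z⁻¹ : F) ^ p.natDegree ≠ 0 := pow_ne_zero _ hz'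
  field_simp at h ⊢
  have hzz : z ^ p.natDegree * z⁻¹ ^ p.natDegree = 1 := by
    rw [← mul_pow, mul_inv_cancel₀ hz, one_pow]
  linear_combination z ^ p.natDegree * h - p.reverse.eval z * hzz

theorem stmt_17 {F : Type*} [Field F] [Fintype F] [DecidableEq F]
    (d ℓ : ℕ) (hd : d ∣ Fintype.card F - 1) (hd2 : 2 ≤ d) (hℓ : 1 ≤ ℓ)
    (g f : F[X]) (hg1 : 1 ≤ g.natDegree)
    (hgdeg : g.natDegree < (Fintype.card F - 1) / d - ℓ)
    (hf : f = X ^ ((Fintype.card F - 1) / d - ℓ) + g)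
    (hf0 : f.coeff 0 ≠ 0)
    (G : ℕ → F[X]) (L : ℕ → ℤ)
    (hG0 : G 0 = g) (hL0 : L 0 = ℓ)
    (hGrec : ∀ i, G (i + 1) = -((G i).reverse ^ d))
    (hLrec : ∀ i, L (i + 1) =
      (((Fintype.card F - 1) / d : ℕ) : ℤ) - d * (L i + (G i).natDegree))
    (k : ℕ)
    (hk : ∀ i ≤ k, (d : ℤ) * (L i + (G i).natDegree)
      < (((Fintype.card F - 1) / d : ℕ) : ℤ)) :
    ∀ i ≤ k + 1,
      ((Finset.univ.filter (fun x : F => x ≠ 0 ∧ f.eval x = 0)).card : ℤ)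
        ≤ d * (L i + (G i).natDegree) := by
  set q := Fintype.card F with hq
  set m := (q - 1) / d with hm
  have hdm : d * m = q - 1 := Nat.mul_div_cancel' hd
  have hgne : g ≠ 0 := by
    intro h
    rw [h, natDegree_zero] at hg1; omega
  have hGne : ∀ i, G i ≠ 0 := by
    intro i
    induction i with
    | zero => rwa [hG0]
    | succ n ih =>
      rw [hGrec n]
      exact neg_ne_zero.mpr (pow_ne_zero _ (fun h => ih (Polynomial.reverse_eq_zero.mp h)))
  -- the auxiliary map: identity for even stage, inversion for odd stage
  set s : ℕ → F → F := fun i x => if Even i then x else x⁻¹ with hs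
  have hs_succ : ∀ i x, s (i + 1) x = (s i x)⁻¹ := by
    intro i x
    by_cases h : Even i
    · simp [hs, h, Nat.even_add_one]
    · simp [hs, h, Nat.even_add_one]
  have hs_ne : ∀ i {x : F}, x ≠ 0 → s i x ≠ 0 := by
    intro i x hx
    by_cases h : Even i <;> simp [hs, h, hx]
  have hs_inj : ∀ i, Function.Injective (s i) := by
    intro i
    by_cases h : Even i <;> simp only [hs, h, if_true, if_false]
    · exact fun a b hab => hab
    · exact fun a b hab => inv_injective hab
  have hℓm : ℓ < m := by omega
  have key : ∀ i ≤ k + 1, ∃ (l' : ℕ) (c : F), 1 ≤ l' ∧ (l' : ℤ) = L i ∧ c ≠ 0 ∧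
      ∀ x : F, x ≠ 0 → f.eval x = 0 →
        (s i x) ^ (d * l') * ((G i).eval (s i x)) ^ d = c := by
    intro i
    induction i with
    | zero =>
      intro _
      refine ⟨ℓ, (-1 : F) ^ d, hℓ, by rw [hL0], pow_ne_zero _ (by norm_num), ?_⟩
      intro x hx hfx
      have hx1 : x ^ (q - 1) = 1 := FiniteField.pow_card_sub_one_eq_one x hx
      have heval : x ^ (m - ℓ) = -g.eval x := by
        rw [hf] at hfx
        simp only [eval_add, eval_pow, eval_X] at hfx
        linear_combination hfx
      have hml : m - ℓ + ℓ = m := Nat.sub_add_cancel hℓm.le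
      have h1 : (x ^ (m - ℓ)) ^ d * x ^ (d * ℓ) = 1 := by
        rw [← pow_mul, ← pow_add]
        rw [show (m - ℓ) * d + d * ℓ = d * m by rw [mul_comm (m-ℓ) d, ← Nat.mul_add, hml]]
        rw [hdm]; exact hx1
      rw [heval, neg_pow] at h1
      simp only [hG0, hs]
      have : Even 0 := Even.zero
      rw [if_pos this]
      -- h1 : (-1)^d * g.eval x ^ d * x ^ (d*ℓ) = 1
      have h2 : ((-1 : F) ^ d) * (x ^ (d * ℓ) * g.eval x ^ d) = 1 := by linear_combination h1
      have hsign : ((-1 : F) ^ d) * ((-1 : F) ^ d) = 1 := by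
        rw [← pow_add]; exact Even.neg_one_pow ⟨d, by ring⟩
      calc x ^ (d * ℓ) * g.eval x ^ d
          = ((-1:F)^d * (-1:F)^d) * (x ^ (d * ℓ) * g.eval x ^ d) := by rw [hsign]; ring
        _ = (-1:F)^d * ((-1:F)^d * (x ^ (d * ℓ) * g.eval x ^ d)) := by ring
        _ = (-1:F)^d := by rw [h2, mul_one]
    | succ i ih =>
      intro hik
      have hik' : i ≤ k := by omega
      obtain ⟨l', c, hl1, hlL, hc, hkey⟩ := ih (by omega)
      set n := (G i).natDegree with hn
      have hLpos : 0 < L (i + 1) := by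
        have := hk i hik'
        rw [hLrec i]
        omega
      refine ⟨(L (i+1)).toNat, (-1 : F) ^ d * c ^ d, by omega, by omega,
        mul_ne_zero (pow_ne_zero _ (by norm_num)) (pow_ne_zero _ hc), ?_⟩
      set l'' := (L (i+1)).toNat with hl''
      have hbal : d * l'' + d * d * (l' + n) = d * m := by
        have h1 : (l'' : ℤ) = L (i + 1) := by omega
        have h2 : (d : ℤ) * l'' + d * d * (l' + n) = d * m := by
          rw [h1, hLrec i, ← hlL]; push_cast; ring
        exact_mod_cast h2
      intro x hx hfx
      have hy := hkey x hx hfx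
      set y := s i x with hy'
      have hyne : y ≠ 0 := hs_ne i hx
      have hz' : s (i + 1) x = y⁻¹ := hs_succ i x
      set z := y⁻¹ with hzdef
      have hzne : z ≠ 0 := inv_ne_zero hyne
      rw [hz']
      -- evaluate G (i+1) at z
      have hrev : (G i).reverse.eval z = (G i).eval y * z ^ n := by
        rw [my_eval_reverse (G i) hzne, hzdef, inv_inv]
      have hz1 : z ^ (q - 1) = 1 := FiniteField.pow_card_sub_one_eq_one z hzne
      have hzy : ∀ a : ℕ, (z ^ a)⁻¹ = y ^ a := by
        intro a; rw [hzdef, ← inv_pow, inv_inv]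
      have hpowz : z ^ (d * l'') * z ^ (d * d * n) * z ^ (d * d * l') = 1 := by
        rw [← pow_add, ← pow_add, show d * l'' + d * d * n + d * d * l' = d * m by rw [← hbal]; ring, hdm]
        exact hz1
      have hzz : z ^ (d * l'') * z ^ (d * d * n) = y ^ (d * d * l') := by
        rw [← hzy]
        field_simp
        linear_combination hpowz
      calc z ^ (d * l'') * (G (i+1)).eval z ^ d
          = z ^ (d * l'') * (-((G i).reverse.eval z ^ d)) ^ d := by rw [hGrec i]; simp
        _ = (-1:F)^d * (z ^ (d * l'') * ((G i).eval y * z ^ n) ^ (d * d)) := by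
            rw [hrev, neg_pow, ← pow_mul]; ring
        _ = (-1:F)^d * ((z ^ (d * l'') * z ^ (d * d * n)) * (G i).eval y ^ (d * d)) := by
            rw [mul_pow, ← pow_mul, mul_comm n (d*d)]; ring
        _ = (-1:F)^d * (y ^ (d * d * l') * (G i).eval y ^ (d * d)) := by rw [hzz]
        _ = (-1:F)^d * (y ^ (d * l') * (G i).eval y ^ d) ^ d := by
            rw [mul_pow, ← pow_mul, ← pow_mul]; ring_nf
        _ = (-1:F)^d * c ^ d := by rw [hy]
  -- final counting argument
  intro i hi
  obtain ⟨l', c, hl1, hlL, hc, hkey⟩ := key i hi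
  set n := (G i).natDegree with hn
  set P : F[X] := X ^ (d * l') * (G i) ^ d - C c with hP
  have hAne : (X : F[X]) ^ (d * l') * (G i) ^ d ≠ 0 :=
    mul_ne_zero (pow_ne_zero _ X_ne_zero) (pow_ne_zero _ (hGne i))
  have hAdeg : ((X : F[X]) ^ (d * l') * (G i) ^ d).natDegree = d * l' + d * n := by
    rw [natDegree_mul (pow_ne_zero _ X_ne_zero) (pow_ne_zero _ (hGne i)),
      natDegree_X_pow, natDegree_pow]
  have hPdeg : P.natDegree = d * l' + d * n := by rw [hP, natDegree_sub_C, hAdeg]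
  have hPne : P ≠ 0 := by
    intro h
    rw [hP, sub_eq_zero] at h
    have := hAdeg
    rw [h, natDegree_C] at this
    have : d * l' ≥ 2 := le_trans hd2 (Nat.le_mul_of_pos_right d hl1)
    omega
  set Z := Finset.univ.filter (fun x : F => x ≠ 0 ∧ f.eval x = 0) with hZ
  have hmap : ∀ x ∈ Z, s i x ∈ P.roots.toFinset := by
    intro x hx
    rw [hZ, Finset.mem_filter] at hx
    obtain ⟨-, hx0, hfx⟩ := hx
    rw [Multiset.mem_toFinset, mem_roots hPne, IsRoot, hP]
    simp only [eval_sub, eval_mul, eval_pow, eval_X, eval_C]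
    rw [hkey x hx0 hfx, sub_self]
  have hcard : Z.card ≤ P.roots.toFinset.card :=
    Finset.card_le_card_of_injOn (s i) hmap (fun a _ b _ hab => hs_inj i hab)
  have hcard2 : P.roots.toFinset.card ≤ Multiset.card P.roots := Multiset.toFinset_card_le _
  have hcard3 : Multiset.card P.roots ≤ P.natDegree := Polynomial.card_roots' P
  have hfinal : Z.card ≤ d * l' + d * n := by
    rw [← hPdeg]; omega
  have : (Z.card : ℤ) ≤ (d : ℤ) * l' + d * n := by exact_mod_cast hfinal
  rw [← hn] at *
  calc (Z.card : ℤ) ≤ (d : ℤ) * l' + d * n := this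
    _ = d * (L i + n) := by rw [← hlL]; ring
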